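/- Block sGS decomposition theorem (exact case, p ≡ 0): Let Q = U + D + U^* be symmetric positive semidefinite with D block-diagonal positive definite and U strictly upper block-triangular, T = U D^{-1} U^*, and b, x̄ given. Define x' by the backward sweep x'_i = Q_{ii}^{-1}(b_i − Σ_{j<i} Q_{ji}^* x̄_j − Σ_{j>i} Q_{ij} x'_j) for i = s,…,1, and then x^+ by the forward sweep x^+_1 = x'_1 and x^+_i = Q_{ii}^{-1}(b_i − Σ_{j<i} Q_{ji}^* x^+_j − Σ_{j>i} Q_{ij} x'_j) for i = 2,…,s. Then (Q + T) x^+ = b + T x̄, i.e., x^+ is the unique minimizer of (1/2)⟨x, Qx⟩ − ⟨b, x⟩ + (1/2)‖x − x̄‖²_T. -/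

import Mathlib

open Matrix

private lemma swap_dot {n : ℕ} (M : Matrix (Fin n) (Fin n) ℝ) (hM : Mᵀ = M) (x y : Fin n → ℝ) :
    x ⬝ᵥ (M *ᵥ y) = y ⬝ᵥ (M *ᵥ x) := by
  rw [dotProduct_mulVec, ← mulVec_transpose, hM, dotProduct_comm]

theorem stmt13 {N s : ℕ} (β : Fin N → Fin s) (Q D U : Matrix (Fin N) (Fin N) ℝ)
    (hQ : Q.PosSemidef) (hD : D.PosDef)
    (hDblock : ∀ i j, β i ≠ β j → D i j = 0)
    (hUupper : ∀ i j, ¬ β i < β j → U i j = 0)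
    (hdecomp : Q = U + D + Uᵀ)
    (b xbar x' xplus : Fin N → ℝ)
    (hback : (D + U) *ᵥ x' = b - Uᵀ *ᵥ xbar)
    (hforward : (D + Uᵀ) *ᵥ xplus = b - U *ᵥ x')
    (f : (Fin N → ℝ) → ℝ)
    (hf : ∀ x, f x = (1/2) * (x ⬝ᵥ (Q *ᵥ x)) - b ⬝ᵥ x
      + (1/2) * ((x - xbar) ⬝ᵥ ((U * D⁻¹ * Uᵀ) *ᵥ (x - xbar)))) :
    (Q + U * D⁻¹ * Uᵀ) *ᵥ xplus = b + (U * D⁻¹ * Uᵀ) *ᵥ xbar ∧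
    (∀ x, f xplus ≤ f x) ∧ (∀ x, (∀ y, f x ≤ f y) → x = xplus) := by
  set T : Matrix (Fin N) (Fin N) ℝ := U * D⁻¹ * Uᵀ with hTdef
  have hDdet : IsUnit D.det := (Matrix.isUnit_iff_isUnit_det D).mp hD.isUnit
  have hDinvD : D⁻¹ * D = 1 := nonsing_inv_mul D hDdet
  have hDsymm : Dᵀ = D :=
    (D.conjTranspose_eq_transpose_of_trivial).symm.trans hD.isHermitian.eq
  have hDinvsymm : D⁻¹ᵀ = D⁻¹ := by
    rw [transpose_nonsing_inv, hDsymm]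
  have hQsymm : Qᵀ = Q :=
    (Q.conjTranspose_eq_transpose_of_trivial).symm.trans hQ.isHermitian.eq
  have hTsymm : Tᵀ = T := by
    simp [hTdef, transpose_mul, hDinvsymm, Matrix.mul_assoc]
  have hTpsd : T.PosSemidef := by
    have := (hD.inv).posSemidef.mul_mul_conjTranspose_same U
    simpa [conjTranspose_eq_transpose_of_trivial] using this
  -- auxiliary multiplication fact
  have hUDD : U * D⁻¹ * D = U := by
    rw [Matrix.mul_assoc, hDinvD, Matrix.mul_one]
  -- Part 1
  have hUx : Uᵀ *ᵥ xbar = b - (D + U) *ᵥ x' := by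
    rw [hback]; abel
  have e1 : Q + T = (D + Uᵀ) + (U * D⁻¹) * (D + Uᵀ) := by
    have h2 : (U * D⁻¹) * (D + Uᵀ) = U + T := by
      rw [Matrix.mul_add, hUDD, hTdef, Matrix.mul_assoc]
    rw [hdecomp, h2]; abel
  have key : (Q + T) *ᵥ xplus = b + T *ᵥ xbar := by
    rw [e1, add_mulVec, ← mulVec_mulVec, hforward]
    have hTx : T *ᵥ xbar = (U * D⁻¹) *ᵥ (Uᵀ *ᵥ xbar) := by
      rw [mulVec_mulVec]
    rw [hTx, hUx]
    simp only [mulVec_sub, add_mulVec, mulVec_add, mulVec_mulVec, hUDD]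
    abel
  refine ⟨key, ?_⟩
  -- Quadratic form reformulation
  set M : Matrix (Fin N) (Fin N) ℝ := Q + T with hMdef
  set c : Fin N → ℝ := b + T *ᵥ xbar with hcdef
  have hMsymm : Mᵀ = M := by rw [hMdef, transpose_add, hQsymm, hTsymm]
  have hMpsd : M.PosSemidef := hQ.add hTpsd
  have hfM : ∀ x, f x = (1/2) * (x ⬝ᵥ (M *ᵥ x)) - c ⬝ᵥ x
      + (1/2) * (xbar ⬝ᵥ (T *ᵥ xbar)) := by
    intro x
    have hswap : xbar ⬝ᵥ (T *ᵥ x) = x ⬝ᵥ (T *ᵥ xbar) := swap_dot T hTsymm xbar x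
    rw [hf]
    simp only [hMdef, hcdef, add_mulVec, mulVec_sub, dotProduct_add, dotProduct_sub,
      sub_dotProduct, add_dotProduct, hswap, dotProduct_comm (T *ᵥ xbar) x]
    ring
  have hdiff : ∀ x, f x - f xplus
      = (1/2) * ((x - xplus) ⬝ᵥ (M *ᵥ (x - xplus))) := by
    intro x
    have hMx : M *ᵥ xplus = c := key
    have hswap : xplus ⬝ᵥ (M *ᵥ x) = x ⬝ᵥ (M *ᵥ xplus) := swap_dot M hMsymm xplus x
    rw [hfM x, hfM xplus]
    simp only [mulVec_sub, dotProduct_sub, sub_dotProduct, hswap, hMx,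
      dotProduct_comm c x, dotProduct_comm c xplus]
    ring
  have hmin : ∀ x, f xplus ≤ f x := by
    intro x
    have h2 : 0 ≤ (x - xplus) ⬝ᵥ (M *ᵥ (x - xplus)) := by
      simpa using hMpsd.dotProduct_mulVec_nonneg (x - xplus)
    have := hdiff x
    linarith
  refine ⟨hmin, ?_⟩
  intro x hx
  have heq : f x = f xplus := le_antisymm (hx xplus) (hmin x)
  set z : Fin N → ℝ := x - xplus with hzdef
  have hz0 : z ⬝ᵥ (M *ᵥ z) = 0 := by
    have := hdiff x
    rw [heq, sub_self] at this
    linarith [this]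
  have hQz0 : 0 ≤ z ⬝ᵥ (Q *ᵥ z) := by simpa using hQ.dotProduct_mulVec_nonneg z
  have hTz0 : 0 ≤ z ⬝ᵥ (T *ᵥ z) := by simpa using hTpsd.dotProduct_mulVec_nonneg z
  have hsplit : z ⬝ᵥ (M *ᵥ z) = z ⬝ᵥ (Q *ᵥ z) + z ⬝ᵥ (T *ᵥ z) := by
    rw [hMdef, add_mulVec, dotProduct_add]
  have hQz : z ⬝ᵥ (Q *ᵥ z) = 0 := by linarith [hz0, hsplit.symm, hTz0, hQz0]
  have hTz : z ⬝ᵥ (T *ᵥ z) = 0 := by linarith [hz0, hsplit.symm, hTz0, hQz0]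
  -- from T part: Uᵀ z = 0
  have hTexpand : z ⬝ᵥ (T *ᵥ z) = (Uᵀ *ᵥ z) ⬝ᵥ (D⁻¹ *ᵥ (Uᵀ *ᵥ z)) := by
    rw [hTdef, ← mulVec_mulVec, ← mulVec_mulVec, dotProduct_mulVec, ← mulVec_transpose]
  have hUz : Uᵀ *ᵥ z = 0 := by
    by_contra h
    have := hD.inv.dotProduct_mulVec_pos (x := Uᵀ *ᵥ z) h
    rw [hTexpand] at hTz
    simp only [star_trivial] at this
    linarith
  -- Qz = 0
  have hQzv : Q *ᵥ z = 0 := by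
    have := (hQ.dotProduct_mulVec_zero_iff z).mp (by simpa using hQz)
    exact this
  -- z ⬝ᵥ U z = 0
  have hzUz : z ⬝ᵥ (U *ᵥ z) = 0 := by
    rw [dotProduct_mulVec, ← mulVec_transpose, hUz, zero_dotProduct]
  have hzUtz : z ⬝ᵥ (Uᵀ *ᵥ z) = 0 := by rw [hUz, dotProduct_zero]
  have hDz : z ⬝ᵥ (D *ᵥ z) = 0 := by
    have : z ⬝ᵥ (Q *ᵥ z) = z ⬝ᵥ (U *ᵥ z) + z ⬝ᵥ (D *ᵥ z) + z ⬝ᵥ (Uᵀ *ᵥ z) := by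
      rw [hdecomp, add_mulVec, add_mulVec, dotProduct_add, dotProduct_add]
    rw [hQz, hzUz, hzUtz] at this
    linarith
  have hzzero : z = 0 := by
    by_contra h
    have := hD.dotProduct_mulVec_pos (x := z) h
    simp only [star_trivial] at this
    linarith
  have : x - xplus = 0 := hzzero
  exact sub_eq_zero.mp this
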